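/- For every n ≥ 1, La(n, {V, Λ}) = Pa(n, {B_0, B_1}); that is, the maximum size of a family of subsets of [n] containing no weak copy of V and no weak copy of Λ equals the maximum size of a family of subsets of [n] that is a union of pairwise unrelated copies of the one-element poset B_0 and the two-element chain B_1. -/

import Mathlib

/-- The family `F` contains a (weak) copy of the poset `Q`: there is an injective
`g : Q → F` with `x < y` implying `g x ⊊ g y`. -/
def ContainsCopy (Q : Type*) [PartialOrder Q] {n : ℕ}
    (F : Finset (Finset (Fin n))) : Prop :=
  ∃ g : Q → Finset (Fin n), Function.Injective g ∧ (∀ x, g x ∈ F) ∧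
    ∀ x y : Q, x < y → g x ⊂ g y

/-- The three-element poset `V`, with `a < b`, `a < c`, and `b, c` incomparable. -/
inductive VT : Type
  | a | b | c
  deriving DecidableEq

instance : Fintype VT where
  elems := {VT.a, VT.b, VT.c}
  complete := by
    intro x
    cases x <;> simp

instance : PartialOrder VT where
  le x y := x = y ∨ x = VT.a
  le_refl x := Or.inl rfl
  le_trans := by
    intro x y z hxy hyz
    rcases hxy with rfl | h
    · exact hyz
    · exact Or.inr h
  le_antisymm := by
    intro x y hxy hyx
    rcases hxy with rfl | h
    · rfl
    · rcases hyx with h' | h'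
      · exact h'.symm
      · rw [h, h']

/-- A weak embedding of a poset `P` into the Boolean lattice `B_n`:
an injective map such that `a < b` implies `f a ⊊ f b`. -/
def IsWeakEmbedding {P : Type*} [PartialOrder P] {n : ℕ} (f : P → Finset (Fin n)) : Prop :=
  Function.Injective f ∧ ∀ a b : P, a < b → f a ⊂ f b

/-- A (weak) copy of the poset `P` in `B_n`: the image of a weak embedding. -/
def IsCopy (P : Type*) [PartialOrder P] [Fintype P] {n : ℕ}
    (C : Finset (Finset (Fin n))) : Prop :=
  ∃ f : P → Finset (Fin n), IsWeakEmbedding f ∧ C = Finset.image f Finset.univ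

/-- Two families of subsets of `[n]` are unrelated if no member of one is comparable
(under inclusion) with a member of the other. -/
def Unrelated {n : ℕ} (F₁ F₂ : Finset (Finset (Fin n))) : Prop :=
  ∀ A ∈ F₁, ∀ B ∈ F₂, ¬ A ⊆ B ∧ ¬ B ⊆ A

/-- `F` is a union of pairwise unrelated copies of `P` in `B_n`. -/
def IsUnionOfUnrelatedCopies (P : Type*) [PartialOrder P] [Fintype P] {n : ℕ}
    (F : Finset (Finset (Fin n))) : Prop :=
  ∃ 𝒞 : Finset (Finset (Finset (Fin n))),
    (∀ C ∈ 𝒞, IsCopy P C) ∧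
    (∀ C₁ ∈ 𝒞, ∀ C₂ ∈ 𝒞, C₁ ≠ C₂ → Unrelated C₁ C₂) ∧
    F = 𝒞.sup id

/-- `Pa P n`: the maximum size of a family of subsets of `[n]` that is a union of
pairwise unrelated copies of `P`. -/
noncomputable def Pa (P : Type*) [PartialOrder P] [Fintype P] (n : ℕ) : ℕ :=
  sSup {m | ∃ F : Finset (Finset (Fin n)), IsUnionOfUnrelatedCopies P F ∧ F.card = m}

/-- `F` is a union of pairwise unrelated copies of posets from the collection
`{B₀, B₁}`, where `B₀ = Fin 1` is the one-element poset and `B₁ = Fin 2` is the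
two-element chain. -/
def IsUnionOfUnrelatedCopies01 {n : ℕ} (F : Finset (Finset (Fin n))) : Prop :=
  ∃ 𝒞 : Finset (Finset (Finset (Fin n))),
    (∀ C ∈ 𝒞, IsCopy (Fin 1) C ∨ IsCopy (Fin 2) C) ∧
    (∀ C₁ ∈ 𝒞, ∀ C₂ ∈ 𝒞, C₁ ≠ C₂ → Unrelated C₁ C₂) ∧
    F = 𝒞.sup id

lemma VT.lt_iff (x y : VT) : x < y ↔ x = VT.a ∧ y ≠ VT.a := by
  constructor
  · rintro ⟨hle, hnle⟩
    have hy : ¬ (y = x ∨ y = VT.a) := hnle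
    push_neg at hy
    rcases hle with rfl | rfl
    · exact absurd rfl hy.1
    · exact ⟨rfl, hy.2⟩
  · rintro ⟨rfl, hy⟩
    refine ⟨Or.inr rfl, ?_⟩
    rintro (h | h) <;> exact hy h

lemma noV_iff {n : ℕ} (F : Finset (Finset (Fin n))) :
    ¬ContainsCopy VT F ↔
      ∀ A ∈ F, ∀ B ∈ F, ∀ C ∈ F, A ⊂ B → A ⊂ C → B = C := by
  constructor
  · intro h A hA B hB C hC hAB hAC
    by_contra hBC
    have h1 : A ≠ B := by rintro rfl; exact ssubset_irrefl _ hAB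
    have h2 : A ≠ C := by rintro rfl; exact ssubset_irrefl _ hAC
    apply h
    refine ⟨fun x => match x with | .a => A | .b => B | .c => C, ?_, ?_, ?_⟩
    · intro x y hxy
      cases x <;> cases y <;> simp_all
    · intro x; cases x <;> assumption
    · intro x y hxy
      rw [VT.lt_iff] at hxy
      obtain ⟨rfl, hy⟩ := hxy
      cases y
      · exact absurd rfl hy
      · exact hAB
      · exact hAC
  · intro h ⟨g, hinj, hmem, hlt⟩
    have h1 : g VT.a ⊂ g VT.b := hlt _ _ ((VT.lt_iff _ _).2 ⟨rfl, by simp⟩)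
    have h2 : g VT.a ⊂ g VT.c := hlt _ _ ((VT.lt_iff _ _).2 ⟨rfl, by simp⟩)
    have := h _ (hmem VT.a) _ (hmem VT.b) _ (hmem VT.c) h1 h2
    exact absurd (hinj this) (by simp)

lemma dual_lt_iff (x y : VTᵒᵈ) :
    x < y ↔ OrderDual.ofDual y < OrderDual.ofDual x := Iff.rfl

lemma noL_iff {n : ℕ} (F : Finset (Finset (Fin n))) :
    ¬ContainsCopy VTᵒᵈ F ↔
      ∀ A ∈ F, ∀ B ∈ F, ∀ C ∈ F, B ⊂ A → C ⊂ A → B = C := by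
  constructor
  · intro h A hA B hB C hC hBA hCA
    by_contra hBC
    have h1 : B ≠ A := by rintro rfl; exact ssubset_irrefl _ hBA
    have h2 : C ≠ A := by rintro rfl; exact ssubset_irrefl _ hCA
    apply h
    refine ⟨(fun v => match v with | .a => A | .b => B | .c => C) ∘ OrderDual.ofDual,
      ?_, ?_, ?_⟩
    · refine Function.Injective.comp ?_ (fun _ _ hh => hh)
      intro x y hxy
      cases x <;> cases y <;> simp_all
    · intro x
      show (match OrderDual.ofDual x with | .a => A | .b => B | .c => C) ∈ F
      cases OrderDual.ofDual x <;> assumption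
    · intro x y hxy
      rw [dual_lt_iff, VT.lt_iff] at hxy
      obtain ⟨hy, hx⟩ := hxy
      show (match OrderDual.ofDual x with | .a => A | .b => B | .c => C)
        ⊂ (match OrderDual.ofDual y with | .a => A | .b => B | .c => C)
      rw [hy]
      rcases hxa : OrderDual.ofDual x with _ | _ | _
      · exact absurd hxa hx
      · exact hBA
      · exact hCA
  · intro h ⟨g, hinj, hmem, hlt⟩
    have h1 : g (OrderDual.toDual VT.b) ⊂ g (OrderDual.toDual VT.a) :=
      hlt _ _ ((VT.lt_iff _ _).2 ⟨rfl, fun hh => VT.noConfusion hh⟩)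
    have h2 : g (OrderDual.toDual VT.c) ⊂ g (OrderDual.toDual VT.a) :=
      hlt _ _ ((VT.lt_iff _ _).2 ⟨rfl, fun hh => VT.noConfusion hh⟩)
    have h3 := h _ (hmem _) _ (hmem _) _ (hmem _) h1 h2
    have h4 : VT.b = VT.c := OrderDual.toDual.injective (hinj h3)
    exact VT.noConfusion h4

variable {n : ℕ}

/-- The comparability component of `A` in `F`. -/
def compF (F : Finset (Finset (Fin n))) (A : Finset (Fin n)) : Finset (Finset (Fin n)) :=
  F.filter (fun X => X ⊆ A ∨ A ⊆ X)

lemma compF_subset (F : Finset (Finset (Fin n))) (A : Finset (Fin n)) :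
    compF F A ⊆ F := Finset.filter_subset _ _

lemma mem_compF_self {F : Finset (Finset (Fin n))} {A : Finset (Fin n)} (hA : A ∈ F) :
    A ∈ compF F A := Finset.mem_filter.2 ⟨hA, Or.inl Finset.Subset.rfl⟩

section Structure

variable {F : Finset (Finset (Fin n))}
  (hV : ∀ A ∈ F, ∀ B ∈ F, ∀ C ∈ F, A ⊂ B → A ⊂ C → B = C)
  (hL : ∀ A ∈ F, ∀ B ∈ F, ∀ C ∈ F, B ⊂ A → C ⊂ A → B = C)

include hV hL

lemma two_comp {A X Y : Finset (Fin n)} (hA : A ∈ F) (hX : X ∈ F) (hY : Y ∈ F)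
    (hX' : X ≠ A) (hY' : Y ≠ A) (hcX : X ⊆ A ∨ A ⊆ X) (hcY : Y ⊆ A ∨ A ⊆ Y) :
    X = Y := by
  rcases hcX with h1 | h1 <;> rcases hcY with h2 | h2
  · exact hL A hA X hX Y hY (h1.ssubset_of_ne hX') (h2.ssubset_of_ne hY')
  · have hAY : A ⊂ Y := h2.ssubset_of_ne (Ne.symm hY')
    have hXA : X ⊂ A := h1.ssubset_of_ne hX'
    have := hV X hX A hA Y hY hXA (hXA.trans hAY)
    exact absurd this (ne_of_ssubset hAY)
  · have hAX : A ⊂ X := h1.ssubset_of_ne (Ne.symm hX')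
    have hYA : Y ⊂ A := h2.ssubset_of_ne hY'
    have := hV Y hY A hA X hX hYA (hYA.trans hAX)
    exact absurd this (ne_of_ssubset hAX)
  · exact hV A hA X hX Y hY (h1.ssubset_of_ne (Ne.symm hX')) (h2.ssubset_of_ne (Ne.symm hY'))

lemma compF_eq_of_subset {X Y : Finset (Fin n)} (hX : X ∈ F) (hY : Y ∈ F)
    (hXY : X ⊆ Y) : compF F X = compF F Y := by
  by_cases hxy : X = Y
  · rw [hxy]
  have hss : X ⊂ Y := hXY.ssubset_of_ne hxy
  ext Z
  simp only [compF, Finset.mem_filter]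
  constructor
  · rintro ⟨hZ, h | h⟩
    · exact ⟨hZ, Or.inl (h.trans hXY)⟩
    · by_cases hZX : X = Z
      · exact ⟨hZ, Or.inl (hZX ▸ hXY)⟩
      · have := hV X hX Y hY Z hZ hss (h.ssubset_of_ne hZX)
        exact ⟨hZ, Or.inr (le_of_eq this)⟩
  · rintro ⟨hZ, h | h⟩
    · by_cases hZY : Z = Y
      · exact ⟨hZ, Or.inr (hZY ▸ hXY)⟩
      · have := hL Y hY X hX Z hZ hss (h.ssubset_of_ne hZY)
        exact ⟨hZ, Or.inl (le_of_eq this.symm)⟩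
    · exact ⟨hZ, Or.inr (hXY.trans h)⟩

lemma compF_eq_of_mem {A X : Finset (Fin n)} (hA : A ∈ F) (hX : X ∈ compF F A) :
    compF F X = compF F A := by
  obtain ⟨hXF, h | h⟩ := Finset.mem_filter.1 hX
  · exact compF_eq_of_subset hV hL hXF hA h
  · exact (compF_eq_of_subset hV hL hA hXF h).symm

end Structure

lemma isCopy_one (A : Finset (Fin n)) :
    IsCopy (Fin 1) ({A} : Finset (Finset (Fin n))) := by
  refine ⟨fun _ => A, ⟨fun x y _ => Subsingleton.elim x y, ?_⟩, by simp⟩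
  intro a b hab
  rw [Subsingleton.elim a b] at hab
  exact absurd hab (lt_irrefl _)

lemma isCopy_two {A B : Finset (Fin n)} (h : A ⊂ B) :
    IsCopy (Fin 2) ({A, B} : Finset (Finset (Fin n))) := by
  have hne : A ≠ B := ne_of_ssubset h
  refine ⟨fun i => if i = 0 then A else B, ⟨?_, ?_⟩, ?_⟩
  · intro i j hij
    fin_cases i <;> fin_cases j <;> simp_all
  · intro a b hab
    fin_cases a <;> fin_cases b <;> simp_all <;>
      first
        | exact h
        | exact absurd hab (lt_irrefl _)
        | exact absurd hab (by decide)
  · ext X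
    simp [Fin.exists_fin_two, eq_comm, or_comm]

lemma IsCopy.card_le {P : Type*} [PartialOrder P] [Fintype P]
    {C : Finset (Finset (Fin n))} (h : IsCopy P C) : C.card ≤ Fintype.card P := by
  obtain ⟨f, -, rfl⟩ := h
  exact Finset.card_image_le.trans (by simp)

lemma free_iff_union (F : Finset (Finset (Fin n))) :
    (¬ContainsCopy VT F ∧ ¬ContainsCopy VTᵒᵈ F) ↔ IsUnionOfUnrelatedCopies01 F := by
  rw [noV_iff, noL_iff]
  constructor
  · rintro ⟨hV, hL⟩
    refine ⟨F.image (compF F), ?_, ?_, ?_⟩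
    · intro C hC
      obtain ⟨A, hA, rfl⟩ := Finset.mem_image.1 hC
      by_cases hex : ∃ B ∈ F, B ≠ A ∧ (B ⊆ A ∨ A ⊆ B)
      · obtain ⟨B, hB, hBA, hcB⟩ := hex
        have hcomp : compF F A = {A, B} := by
          ext X
          simp only [compF, Finset.mem_filter, Finset.mem_insert, Finset.mem_singleton]
          constructor
          · rintro ⟨hX, hc⟩
            by_cases hXA : X = A
            · exact Or.inl hXA
            · exact Or.inr (two_comp hV hL hA hX hB hXA hBA hc hcB)
          · rintro (rfl | rfl)
            · exact ⟨hA, Or.inl Finset.Subset.rfl⟩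
            · exact ⟨hB, hcB⟩
        right
        rw [hcomp]
        rcases hcB with h | h
        · rw [Finset.pair_comm]
          exact isCopy_two (h.ssubset_of_ne hBA)
        · exact isCopy_two (h.ssubset_of_ne (Ne.symm hBA))
      · left
        have hcomp : compF F A = {A} := by
          ext X
          simp only [compF, Finset.mem_filter, Finset.mem_singleton]
          constructor
          · rintro ⟨hX, hc⟩
            by_contra hXA
            exact hex ⟨X, hX, hXA, hc⟩
          · rintro rfl
            exact ⟨hA, Or.inl Finset.Subset.rfl⟩
        rw [hcomp]
        exact isCopy_one A
    · intro C₁ h₁ C₂ h₂ hne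
      obtain ⟨A₁, hA₁, rfl⟩ := Finset.mem_image.1 h₁
      obtain ⟨A₂, hA₂, rfl⟩ := Finset.mem_image.1 h₂
      intro X hX Y hY
      have hXF : X ∈ F := compF_subset F A₁ hX
      have hYF : Y ∈ F := compF_subset F A₂ hY
      constructor
      · intro hsub
        exact hne ((compF_eq_of_mem hV hL hA₁ hX).symm.trans
          ((compF_eq_of_subset hV hL hXF hYF hsub).trans (compF_eq_of_mem hV hL hA₂ hY)))
      · intro hsub
        exact hne ((compF_eq_of_mem hV hL hA₁ hX).symm.trans
          ((compF_eq_of_subset hV hL hYF hXF hsub).symm.trans (compF_eq_of_mem hV hL hA₂ hY)))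
    · ext S
      simp only [Finset.mem_sup, Finset.mem_image, id]
      constructor
      · intro hS
        exact ⟨compF F S, ⟨S, hS, rfl⟩, mem_compF_self hS⟩
      · rintro ⟨C, ⟨A, hA, rfl⟩, hSC⟩
        exact compF_subset F A hSC
  · rintro ⟨𝒞, hcopy, hunrel, rfl⟩
    have key : ∀ {A B : Finset (Fin n)},
        A ∈ 𝒞.sup id → B ∈ 𝒞.sup id → (A ⊆ B ∨ B ⊆ A) →
        ∃ C ∈ 𝒞, A ∈ C ∧ B ∈ C := by
      intro A B hA hB hc
      obtain ⟨C₀, hC₀, hAC₀⟩ := Finset.mem_sup.1 hA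
      obtain ⟨C₁, hC₁, hBC₁⟩ := Finset.mem_sup.1 hB
      by_cases h01 : C₀ = C₁
      · exact ⟨C₀, hC₀, hAC₀, h01 ▸ hBC₁⟩
      · have := hunrel C₀ hC₀ C₁ hC₁ h01 A hAC₀ B hBC₁
        rcases hc with h | h
        · exact absurd h this.1
        · exact absurd h this.2
    have card2 : ∀ C ∈ 𝒞, C.card ≤ 2 := by
      intro C hC
      rcases hcopy C hC with h | h
      · exact h.card_le.trans (by simp)
      · exact h.card_le.trans (by simp)
    constructor
    · intro A hA B hB C hC hAB hAC
      by_contra hBC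
      obtain ⟨C₀, hC₀, hAC₀, hBC₀⟩ := key hA hB (Or.inl hAB.subset)
      obtain ⟨C₁, hC₁, hAC₁, hCC₁⟩ := key hA hC (Or.inl hAC.subset)
      have hC₀₁ : C₀ = C₁ := by
        by_contra hne
        exact (hunrel C₀ hC₀ C₁ hC₁ hne A hAC₀ A hAC₁).1 Finset.Subset.rfl
      have hsub : ({A, B, C} : Finset (Finset (Fin n))) ⊆ C₀ := by
        intro X hX
        simp only [Finset.mem_insert, Finset.mem_singleton] at hX
        rcases hX with rfl | rfl | rfl
        · exact hAC₀
        · exact hBC₀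
        · exact hC₀₁ ▸ hCC₁
      have hcard : ({A, B, C} : Finset (Finset (Fin n))).card = 3 :=
        Finset.card_eq_three.2 ⟨A, B, C, ne_of_ssubset hAB, ne_of_ssubset hAC, hBC, rfl⟩
      have := Finset.card_le_card hsub
      have := card2 C₀ hC₀
      omega
    · intro A hA B hB C hC hBA hCA
      by_contra hBC
      obtain ⟨C₀, hC₀, hAC₀, hBC₀⟩ := key hA hB (Or.inr hBA.subset)
      obtain ⟨C₁, hC₁, hAC₁, hCC₁⟩ := key hA hC (Or.inr hCA.subset)
      have hC₀₁ : C₀ = C₁ := by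
        by_contra hne
        exact (hunrel C₀ hC₀ C₁ hC₁ hne A hAC₀ A hAC₁).1 Finset.Subset.rfl
      have hsub : ({A, B, C} : Finset (Finset (Fin n))) ⊆ C₀ := by
        intro X hX
        simp only [Finset.mem_insert, Finset.mem_singleton] at hX
        rcases hX with rfl | rfl | rfl
        · exact hAC₀
        · exact hBC₀
        · exact hC₀₁ ▸ hCC₁
      have hcard : ({A, B, C} : Finset (Finset (Fin n))).card = 3 :=
        Finset.card_eq_three.2 ⟨A, B, C, (ne_of_ssubset hBA).symm, (ne_of_ssubset hCA).symm,
          hBC, rfl⟩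
      have := Finset.card_le_card hsub
      have := card2 C₀ hC₀
      omega

/-- For `n ≥ 1`, `La(n, {V, Λ}) = Pa(n, {B₀, B₁})`: the maximum
size of a family with no weak copy of `V` and no weak copy of `Λ` equals the maximum
size of a family that is a union of pairwise unrelated copies of the one-element
poset and of the two-element chain. -/
theorem la_eq_pa (n : ℕ) (hn : 1 ≤ n) :
    sSup {m | ∃ F : Finset (Finset (Fin n)),
        ¬ContainsCopy VT F ∧ ¬ContainsCopy VTᵒᵈ F ∧ F.card = m}
      = sSup {m | ∃ F : Finset (Finset (Fin n)),
          IsUnionOfUnrelatedCopies01 F ∧ F.card = m} := by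
  congr 1
  ext m
  constructor
  · rintro ⟨F, h1, h2, h3⟩
    exact ⟨F, (free_iff_union F).1 ⟨h1, h2⟩, h3⟩
  · rintro ⟨F, hu, h3⟩
    obtain ⟨h1, h2⟩ := (free_iff_union F).2 hu
    exact ⟨F, h1, h2, h3⟩
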